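/- Let K be a finite field with char(K) = 2, L a field extension of K of finite degree k ≥ 1, and S = {restrictScalars_K(l) : l a 1-dimensional L-subspace of L²} the planar spread of the 2k-dimensional K-space L². Let M ∈ GL(2, L) have irreducible characteristic polynomial over L and multiplicative order |L|² − 1, and set H̄ = ⟨M^{|L|−1}⟩, acting K-linearly on L². Then H̄ acts regularly on S: for any U, U′ ∈ S there is exactly one A ∈ H̄ with U·A = U′; in particular S = {U·A : A ∈ H̄} for any U ∈ S. -/

import Mathlib

open Module

/-- The planar spread of the `K`-vector space `L²` obtained by field reduction: the set of
`K`-subspaces arising as `restrictScalars K` of the `L`-lines of `L²`. -/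
def fieldReductionSpread (K L : Type*) [Field K] [Field L] [Algebra K L] :
    Set (Submodule K (Fin 2 → L)) :=
  {U | ∃ l : Submodule L (Fin 2 → L), finrank L l = 1 ∧ U = l.restrictScalars K}

/-- The `K`-linear action of `A ∈ GL(2, L)` on `K`-subspaces of `L²`: `U · A` is the image
of `U` under the (in particular `K`-linear) map given by the matrix `A`. -/
noncomputable def mapGLK (K : Type*) {L : Type*} [Field K] [Field L] [Algebra K L]
    (A : GL (Fin 2) L) (U : Submodule K (Fin 2 → L)) : Submodule K (Fin 2 → L) :=
  U.map (LinearMap.restrictScalars K (Matrix.toLin' (A : Matrix (Fin 2) (Fin 2) L)))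

open Polynomial Module
open scoped Matrix

namespace SingerAux

lemma quad_factor {F : Type*} [Field F] (t d σ x : F)
    (h1 : x ^ 2 - t * x + d = 0) (h2 : σ ^ 2 - t * σ + d = 0) :
    (σ - x) * (σ - (t - x)) = 0 := by linear_combination h2 - h1

variable {L : Type*} [Field L]

local notation "Mat" => Matrix (Fin 2) (Fin 2) L

lemma charpoly_fin_two' (N : Mat) : N.charpoly = X ^ 2 - C N.trace * X + C N.det := by
  rw [Matrix.charpoly, Matrix.det_fin_two]
  simp [Matrix.charmatrix_apply_eq, Matrix.charmatrix_apply_ne, Matrix.trace_fin_two,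
    Matrix.det_fin_two]
  ring

lemma aux_isUnit_aeval (N : Mat) (hirr : Irreducible N.charpoly)
    {p : L[X]} (hne : aeval N p ≠ 0) : IsUnit (aeval N p) := by
  have hndvd : ¬ N.charpoly ∣ p := by
    rintro ⟨r, rfl⟩
    exact hne (by rw [map_mul, Matrix.aeval_self_charpoly, zero_mul])
  obtain ⟨a, b, hab⟩ := hirr.coprime_iff_not_dvd.2 hndvd
  have h1 : aeval N b * aeval N p = 1 := by
    have := congrArg (aeval N) hab
    simpa [Matrix.aeval_self_charpoly] using this
  have h2 : aeval N p * aeval N b = 1 := by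
    rw [← map_mul, mul_comm, map_mul, h1]
  exact ⟨⟨aeval N p, aeval N b, h2, h1⟩, rfl⟩

lemma aux_mulVec_injective {A : Mat} (h : IsUnit A) {v : Fin 2 → L}
    (hv : A.mulVec v = 0) : v = 0 := by
  obtain ⟨u, rfl⟩ := h
  have h2 : ((u⁻¹ : Matˣ) : Mat).mulVec ((u : Mat).mulVec v) = v := by
    rw [Matrix.mulVec_mulVec, u.inv_mul, Matrix.one_mulVec]
  rw [hv, Matrix.mulVec_zero] at h2
  exact h2.symm

lemma aux_eq_scalar (N : Mat) (hirr : Irreducible N.charpoly)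
    (p : L[X]) {v : Fin 2 → L} (hv : v ≠ 0) (c : L)
    (h : (aeval N p).mulVec v = c • v) : aeval N p = c • (1 : Mat) := by
  by_contra hne
  have h0 : aeval N (p - C c) ≠ 0 := by
    rw [map_sub, aeval_C, Algebra.algebraMap_eq_smul_one, sub_ne_zero]
    exact hne
  have hu := aux_isUnit_aeval N hirr h0
  apply hv
  apply aux_mulVec_injective hu
  rw [map_sub, aeval_C, Matrix.sub_mulVec, h, Algebra.algebraMap_eq_smul_one,
    Matrix.smul_mulVec, Matrix.one_mulVec, sub_self]

lemma aux_pow_eq_scalar (N : Mat) (hirr : Irreducible N.charpoly) (i : ℕ)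
    {v : Fin 2 → L} (hv : v ≠ 0) (c : L) (h : (N ^ i).mulVec v = c • v) :
    N ^ i = c • (1 : Mat) := by
  have := aux_eq_scalar N hirr (X ^ i) hv c (by simpa using h)
  simpa using this

lemma aux_charpoly_dvd [Fintype L] [CharP L 2] (N : Mat) (hirr : Irreducible N.charpoly) :
    N.charpoly ∣ X ^ (Fintype.card L + 1) - C N.det := by
  haveI : Fact (Irreducible N.charpoly) := ⟨hirr⟩
  have hq2 : 2 ≤ Fintype.card L := Fintype.one_lt_card
  obtain ⟨n, hp2, hcard⟩ := FiniteField.card L 2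
  haveI : Fact (Nat.Prime 2) := ⟨hp2⟩
  haveI hcharF : CharP (AdjoinRoot N.charpoly) 2 :=
    charP_of_injective_algebraMap (algebraMap L (AdjoinRoot N.charpoly)).injective 2
  have hxroot : (AdjoinRoot.root N.charpoly) ^ 2
      - algebraMap L _ N.trace * AdjoinRoot.root N.charpoly + algebraMap L _ N.det = 0 := by
    have h0 : (aeval (AdjoinRoot.root N.charpoly))
        (X ^ 2 - C N.trace * X + C N.det : L[X]) = 0 := by
      rw [← charpoly_fin_two', AdjoinRoot.aeval_eq, AdjoinRoot.mk_self]
    simpa using h0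
  have hfrob : ∀ y : L, algebraMap L (AdjoinRoot N.charpoly) y ^ Fintype.card L
      = algebraMap L _ y := by
    intro y
    rw [← map_pow, FiniteField.pow_card]
  have hψ : ∀ u v : AdjoinRoot N.charpoly,
      (u + v) ^ Fintype.card L = u ^ Fintype.card L + v ^ Fintype.card L := by
    intro u v
    rw [hcard]
    exact add_pow_char_pow u v 2 n
  have hσroot : (AdjoinRoot.root N.charpoly ^ Fintype.card L) ^ 2
      - algebraMap L _ N.trace * (AdjoinRoot.root N.charpoly ^ Fintype.card L)
      + algebraMap L _ N.det = 0 := by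
    have h1 : ((AdjoinRoot.root N.charpoly) ^ 2
        - algebraMap L _ N.trace * AdjoinRoot.root N.charpoly
        + algebraMap L _ N.det) ^ Fintype.card L = 0 := by
      rw [hxroot]; exact zero_pow (by omega)
    rw [sub_eq_add_neg, CharTwo.neg_eq, hψ, hψ, mul_pow, hfrob, hfrob,
      pow_right_comm] at h1
    rw [sub_eq_add_neg, CharTwo.neg_eq]
    exact h1
  have hfactor := quad_factor _ _ _ _ hxroot hσroot
  have hkey : AdjoinRoot.root N.charpoly ^ (Fintype.card L + 1) = algebraMap L _ N.det := by
    rcases mul_eq_zero.1 hfactor with h | h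
    · exfalso
      have hxx : AdjoinRoot.root N.charpoly ^ Fintype.card L = AdjoinRoot.root N.charpoly :=
        sub_eq_zero.1 h
      have hPne : (X ^ Fintype.card L - X : (AdjoinRoot N.charpoly)[X]) ≠ 0 := by
        intro h0
        have h1 : (X : (AdjoinRoot N.charpoly)[X]) ^ Fintype.card L = X := sub_eq_zero.1 h0
        have h2 := congrArg natDegree h1
        rw [natDegree_X_pow, natDegree_X] at h2
        omega
      have hxnot : AdjoinRoot.root N.charpoly
          ∉ Finset.univ.image (algebraMap L (AdjoinRoot N.charpoly)) := by
        intro hmem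
        obtain ⟨c, -, hc⟩ := Finset.mem_image.1 hmem
        have h0 : AdjoinRoot.mk N.charpoly (X - C c) = 0 := by
          rw [map_sub, AdjoinRoot.mk_X, AdjoinRoot.mk_C, sub_eq_zero]
          exact (by simpa [AdjoinRoot.algebraMap_eq] using hc.symm)
        have hdvd := AdjoinRoot.mk_eq_zero.1 h0
        have hle := natDegree_le_of_dvd hdvd (X_sub_C_ne_zero c)
        rw [natDegree_X_sub_C, Matrix.charpoly_natDegree_eq_dim] at hle
        simp at hle
      have hcards : (insert (AdjoinRoot.root N.charpoly)
          (Finset.univ.image (algebraMap L (AdjoinRoot N.charpoly)))).card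
          = Fintype.card L + 1 := by
        rw [Finset.card_insert_of_notMem hxnot,
          Finset.card_image_of_injective _ (algebraMap L (AdjoinRoot N.charpoly)).injective,
          Finset.card_univ]
      have hsub : (insert (AdjoinRoot.root N.charpoly)
          (Finset.univ.image (algebraMap L (AdjoinRoot N.charpoly))))
          ⊆ (X ^ Fintype.card L - X : (AdjoinRoot N.charpoly)[X]).roots.toFinset := by
        intro y hy
        rw [Multiset.mem_toFinset, mem_roots hPne]
        rcases Finset.mem_insert.1 hy with rfl | hy
        · simp [IsRoot, hxx]
        · obtain ⟨c, -, rfl⟩ := Finset.mem_image.1 hy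
          have hf := hfrob c
          rw [AdjoinRoot.algebraMap_eq] at hf
          simp [IsRoot, hf]
      have h1 := Finset.card_le_card hsub
      have h2 := Multiset.toFinset_card_le (X ^ Fintype.card L - X
        : (AdjoinRoot N.charpoly)[X]).roots
      have h3 := card_roots' (X ^ Fintype.card L - X : (AdjoinRoot N.charpoly)[X])
      have h4 : (X ^ Fintype.card L - X : (AdjoinRoot N.charpoly)[X]).natDegree
          ≤ Fintype.card L := by
        have h5 := natDegree_sub_le (X ^ Fintype.card L : (AdjoinRoot N.charpoly)[X]) X
        rw [natDegree_X_pow, natDegree_X] at h5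
        have h6 : Fintype.card L ⊔ 1 = Fintype.card L := max_eq_left (by omega)
        omega
      omega
    · have hσ : AdjoinRoot.root N.charpoly ^ Fintype.card L
          = algebraMap L _ N.trace - AdjoinRoot.root N.charpoly := sub_eq_zero.1 h
      rw [pow_succ, hσ]
      linear_combination -hxroot
  rw [← AdjoinRoot.mk_eq_zero, map_sub, map_pow, AdjoinRoot.mk_X, AdjoinRoot.mk_C,
    ← AdjoinRoot.algebraMap_eq, hkey, sub_self]

/-- `N^(q+1)` is the scalar matrix `det N`. -/
lemma aux_pow_card_add_one [Fintype L] [CharP L 2] (N : Mat)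
    (hirr : Irreducible N.charpoly) :
    N ^ (Fintype.card L + 1) = N.det • (1 : Mat) := by
  obtain ⟨r, hr⟩ := aux_charpoly_dvd N hirr
  have := congrArg (aeval N) hr
  rw [map_mul, Matrix.aeval_self_charpoly, zero_mul, map_sub, aeval_X_pow, aeval_C,
    Algebra.algebraMap_eq_smul_one, sub_eq_zero] at this
  exact this

/-- The linear equivalence of `L²` given by `A : GL (Fin 2) L`. -/
noncomputable def glEquiv (A : GL (Fin 2) L) : (Fin 2 → L) ≃ₗ[L] (Fin 2 → L) :=
  LinearEquiv.ofLinear (Matrix.toLin' (A : Mat)) (Matrix.toLin' ((A⁻¹ : GL (Fin 2) L) : Mat))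
    (by rw [← Matrix.toLin'_mul, ← Units.val_mul]; simp)
    (by rw [← Matrix.toLin'_mul, ← Units.val_mul]; simp)

lemma glEquiv_coe (A : GL (Fin 2) L) :
    (glEquiv A : (Fin 2 → L) →ₗ[L] (Fin 2 → L)) = Matrix.toLin' (A : Mat) := rfl

lemma finrank_map_glEquiv (A : GL (Fin 2) L) (l : Submodule L (Fin 2 → L)) :
    finrank L (l.map (Matrix.toLin' (A : Mat))) = finrank L l := by
  rw [← glEquiv_coe]
  exact LinearEquiv.finrank_map_eq (glEquiv A) l

lemma finrank_one_span {l : Submodule L (Fin 2 → L)} (hl : finrank L l = 1) :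
    ∃ v : Fin 2 → L, v ≠ 0 ∧ l = Submodule.span L {v} := by
  obtain ⟨v, hv0, hv⟩ := finrank_eq_one_iff'.1 hl
  refine ⟨(v : Fin 2 → L), by simpa using hv0, le_antisymm ?_ ?_⟩
  · intro x hx
    obtain ⟨c, hc⟩ := hv ⟨x, hx⟩
    have : c • (v : Fin 2 → L) = x := congrArg Subtype.val hc
    rw [← this]
    exact Submodule.smul_mem _ _ (Submodule.mem_span_singleton_self _)
  · rw [Submodule.span_le, Set.singleton_subset_iff]
    exact v.2

lemma map_span_singleton (A : GL (Fin 2) L) (v : Fin 2 → L) :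
    (Submodule.span L {v}).map (Matrix.toLin' (A : Mat))
      = Submodule.span L {(A : Mat).mulVec v} := by
  rw [Submodule.map_span, Set.image_singleton, Matrix.toLin'_apply]

lemma map_scalar_smul {c : L} (hc : c ≠ 0) (l : Submodule L (Fin 2 → L)) :
    l.map (Matrix.toLin' (c • (1 : Mat))) = l := by
  have htl : ∀ w : Fin 2 → L, Matrix.toLin' (c • (1 : Mat)) w = c • w := by
    intro w
    rw [Matrix.toLin'_apply, Matrix.smul_mulVec, Matrix.one_mulVec]
  apply le_antisymm
  · rintro x ⟨y, hy, rfl⟩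
    rw [htl]
    exact Submodule.smul_mem _ _ hy
  · intro x hx
    exact ⟨c⁻¹ • x, Submodule.smul_mem _ _ hx, by
      rw [htl, smul_smul, mul_inv_cancel₀ hc, one_smul]⟩

end SingerAux

open SingerAux

section Reduction

variable {K L : Type*} [Field K] [Field L] [Algebra K L]

lemma mapGLK_restrictScalars (A : GL (Fin 2) L) (l : Submodule L (Fin 2 → L)) :
    mapGLK K A (l.restrictScalars K)
      = (l.map (Matrix.toLin' (A : Matrix (Fin 2) (Fin 2) L))).restrictScalars K := by
  ext x
  simp only [mapGLK, Submodule.mem_map, Submodule.restrictScalars_mem,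
    LinearMap.coe_restrictScalars]

end Reduction

/-- Let `K` be a finite field of characteristic `2`, `L/K` an extension of
degree `k ≥ 1`, `S` the planar spread of the `K`-space `L²` by field reduction,
`M ∈ GL(2, L)` a Singer cycle and `H̄ = ⟨M^{|L|−1}⟩`. Then `H̄` acts regularly on `S`:
for any `U, U′ ∈ S` there is exactly one `A ∈ H̄` with `U·A = U′`; in particular `S` is the
`H̄`-orbit of any of its elements. -/
theorem singer_subgroup_regular_on_spread_char_two
    {K L : Type*} [Field K] [Fintype K] [Field L] [Fintype L] [Algebra K L]
    (hchar : ringChar K = 2)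
    (k : ℕ) (hk : 1 ≤ k) (hdeg : finrank K L = k)
    (M : GL (Fin 2) L)
    (hirr : Irreducible (Matrix.charpoly (M : Matrix (Fin 2) (Fin 2) L)))
    (hord : orderOf M = Fintype.card L ^ 2 - 1) :
    (∀ U ∈ fieldReductionSpread K L, ∀ U' ∈ fieldReductionSpread K L,
      ∃! A : GL (Fin 2) L,
        A ∈ Subgroup.zpowers (M ^ (Fintype.card L - 1)) ∧ mapGLK K A U = U')
    ∧ ∀ U ∈ fieldReductionSpread K L,
        fieldReductionSpread K L
          = {U' | ∃ A ∈ Subgroup.zpowers (M ^ (Fintype.card L - 1)),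
              U' = mapGLK K A U} := by
  classical
  haveI : CharP K 2 := hchar ▸ ringChar.charP K
  haveI hcharL : CharP L 2 := charP_of_injective_algebraMap (algebraMap K L).injective 2
  set q := Fintype.card L with hq
  have hq2 : 2 ≤ q := Fintype.one_lt_card
  have hqeven : Even q := by
    obtain ⟨n, hp2, hcard⟩ := FiniteField.card L 2
    rw [hq, hcard]
    exact even_iff_two_dvd.2 (dvd_pow_self 2 n.ne_zero)
  set g := M ^ (q - 1) with hg
  -- order of the generator of H̄
  have hordg : orderOf g = q + 1 := by
    rw [hg, orderOf_pow, hord]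
    have hsq : q ^ 2 - 1 = (q + 1) * (q - 1) := by
      have := Nat.sq_sub_sq q 1
      simpa using this
    have hdvd : (q - 1) ∣ (q ^ 2 - 1) := ⟨q + 1, by rw [hsq]; ring⟩
    rw [Nat.gcd_eq_right hdvd, hsq, Nat.mul_div_cancel _ (by omega : 0 < q - 1)]
  -- M is a unit matrix, det nonzero
  have hMunit : IsUnit (M : Matrix (Fin 2) (Fin 2) L) := M.isUnit
  have hd0 : (M : Matrix (Fin 2) (Fin 2) L).det ≠ 0 := by
    intro h
    have := (Matrix.isUnit_iff_isUnit_det _).1 hMunit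
    rw [h, isUnit_zero_iff] at this
    exact one_ne_zero this.symm
  -- the scalar power
  have hMqa : (M : Matrix (Fin 2) (Fin 2) L) ^ (q + 1)
      = (M : Matrix (Fin 2) (Fin 2) L).det • 1 := aux_pow_card_add_one _ hirr
  -- powers of M fixing a nonzero vector are trivial
  have hfix : ∀ (i : ℕ) (v : Fin 2 → L), v ≠ 0 →
      (M : Matrix (Fin 2) (Fin 2) L) ^ i *ᵥ v = v → M ^ i = 1 := by
    intro i v hv h
    have h1 := aux_pow_eq_scalar (M : Matrix (Fin 2) (Fin 2) L) hirr i hv 1 (by simpa using h)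
    apply Units.ext
    rw [Units.val_pow_eq_pow_val, h1, one_smul, Units.val_one]
  -- transitivity of ⟨M⟩ on nonzero vectors
  have htrans : ∀ v w : Fin 2 → L, v ≠ 0 → w ≠ 0 →
      ∃ i : ℕ, (M : Matrix (Fin 2) (Fin 2) L) ^ i *ᵥ v = w := by
    intro v w hv hw
    have hq4 : 4 ≤ q ^ 2 := by nlinarith
    haveI : NeZero (q ^ 2 - 1) := ⟨by omega⟩
    have hnz : ∀ j : ℕ, (M : Matrix (Fin 2) (Fin 2) L) ^ j *ᵥ v ≠ 0 := by
      intro j h0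
      exact hv (aux_mulVec_injective (hMunit.pow j) h0)
    set f : ZMod (q ^ 2 - 1) → {w : Fin 2 → L // w ≠ 0} :=
      fun j => ⟨(M : Matrix (Fin 2) (Fin 2) L) ^ j.val *ᵥ v, hnz j.val⟩ with hf
    have hinj0 : ∀ a b : ℕ, a ≤ b →
        (M : Matrix (Fin 2) (Fin 2) L) ^ a *ᵥ v = (M : Matrix (Fin 2) (Fin 2) L) ^ b *ᵥ v →
        (q ^ 2 - 1) ∣ (b - a) := by
      intro a b hab h
      have hsplit : (M : Matrix (Fin 2) (Fin 2) L) ^ b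
          = (M : Matrix (Fin 2) (Fin 2) L) ^ (b - a) * (M : Matrix (Fin 2) (Fin 2) L) ^ a := by
        rw [← pow_add]
        congr 1
        omega
      have hfixv : (M : Matrix (Fin 2) (Fin 2) L) ^ (b - a)
          *ᵥ ((M : Matrix (Fin 2) (Fin 2) L) ^ a *ᵥ v)
          = (M : Matrix (Fin 2) (Fin 2) L) ^ a *ᵥ v := by
        rw [Matrix.mulVec_mulVec, ← hsplit, ← h]
      have h1 := hfix (b - a) _ (hnz a) hfixv
      have h2 := orderOf_dvd_of_pow_eq_one h1
      rwa [hord] at h2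
    have hinj : Function.Injective f := by
      intro i j hij
      have hval : (M : Matrix (Fin 2) (Fin 2) L) ^ i.val *ᵥ v
          = (M : Matrix (Fin 2) (Fin 2) L) ^ j.val *ᵥ v := congrArg Subtype.val hij
      apply ZMod.val_injective
      rcases le_total i.val j.val with hle | hle
      · have := hinj0 _ _ hle hval
        have hlt : j.val - i.val < q ^ 2 - 1 := by
          have := ZMod.val_lt j
          omega
        have h0 := Nat.eq_zero_of_dvd_of_lt this hlt
        omega
      · have h' := hinj0 _ _ hle hval.symm
        have hlt : i.val - j.val < q ^ 2 - 1 := by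
          have := ZMod.val_lt i
          omega
        have := Nat.eq_zero_of_dvd_of_lt h' hlt
        omega
    have hcs : Fintype.card {w : Fin 2 → L // w ≠ 0} = q ^ 2 - 1 := by
      have h1 : Fintype.card {w : Fin 2 → L // w ≠ 0} = Fintype.card (Fin 2 → L) - 1 := by
        rw [Fintype.card_subtype_compl, Fintype.card_subtype_eq]
      rw [h1, Fintype.card_fun]
      simp [hq]
    have hbij : Function.Bijective f := by
      rw [Fintype.bijective_iff_injective_and_card]
      exact ⟨hinj, by rw [ZMod.card, hcs]⟩
    obtain ⟨j, hj⟩ := hbij.2 ⟨w, hw⟩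
    exact ⟨j.val, congrArg Subtype.val hj⟩
  -- gcd fact
  have hgcd : Nat.gcd (q - 1) (q + 1) = 1 := by
    have h2 : Nat.gcd (q - 1) (q + 1) ∣ (q + 1) - (q - 1) :=
      Nat.dvd_sub (Nat.gcd_dvd_right _ _) (Nat.gcd_dvd_left _ _)
    have he : (q + 1) - (q - 1) = 2 := by omega
    rw [he] at h2
    rcases (Nat.dvd_prime Nat.prime_two).1 h2 with h | h
    · exact h
    · exfalso
      have := Nat.gcd_dvd_left (q - 1) (q + 1)
      rw [h] at this
      obtain ⟨m, hm⟩ := hqeven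
      omega
  -- elements of H̄ fixing a line are trivial
  have hfixline : ∀ C : GL (Fin 2) L, C ∈ Subgroup.zpowers g →
      ∀ v : Fin 2 → L, v ≠ 0 →
      (Submodule.span L {v}).map (Matrix.toLin' (C : Matrix (Fin 2) (Fin 2) L))
        = Submodule.span L {v} → C = 1 := by
    intro C hC v hv hmap
    have hCM : C ∈ Subgroup.zpowers M := by
      have hle : Subgroup.zpowers g ≤ Subgroup.zpowers M := Subgroup.zpowers_le.2 (by
        rw [hg]
        exact Subgroup.pow_mem _ (Subgroup.mem_zpowers M) _)
      exact hle hC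
    obtain ⟨i, hi⟩ := mem_powers_iff_mem_zpowers.2 hCM
    have hiC : (M : Matrix (Fin 2) (Fin 2) L) ^ i = (C : Matrix (Fin 2) (Fin 2) L) := by
      rw [← hi, Units.val_pow_eq_pow_val]
    have hmem : (C : Matrix (Fin 2) (Fin 2) L) *ᵥ v ∈ Submodule.span L {v} := by
      rw [← hmap]
      exact ⟨v, Submodule.mem_span_singleton_self v, Matrix.toLin'_apply _ _⟩
    obtain ⟨c, hc⟩ := Submodule.mem_span_singleton.1 hmem
    have hc0 : c ≠ 0 := by
      rintro rfl
      apply hv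
      apply aux_mulVec_injective C.isUnit
      rw [← hc, zero_smul]
    have hscal : (M : Matrix (Fin 2) (Fin 2) L) ^ i = c • 1 :=
      aux_pow_eq_scalar _ hirr i hv c (by rw [hiC, ← hc])
    have hCq1 : C ^ (q - 1) = 1 := by
      apply Units.ext
      rw [Units.val_pow_eq_pow_val, Units.val_one, ← hiC, hscal, _root_.smul_pow, one_pow,
        FiniteField.pow_card_sub_one_eq_one c hc0, one_smul]
    have hdvd1 : orderOf C ∣ q - 1 := orderOf_dvd_of_pow_eq_one hCq1
    have hCq2 : C ^ (q + 1) = 1 := by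
      obtain ⟨z, hz⟩ := hC
      rw [← hz, ← zpow_natCast, ← zpow_mul, mul_comm, zpow_mul, zpow_natCast,
        ← hordg, pow_orderOf_eq_one, one_zpow]
    have hdvd2 : orderOf C ∣ q + 1 := orderOf_dvd_of_pow_eq_one hCq2
    have hone : orderOf C ∣ 1 := hgcd ▸ Nat.dvd_gcd hdvd1 hdvd2
    exact orderOf_eq_one_iff.1 (Nat.dvd_one.1 hone)
  -- existence of an element of H̄ mapping one line to another
  have hexist : ∀ v v' : Fin 2 → L, v ≠ 0 → v' ≠ 0 →
      ∃ A : GL (Fin 2) L, A ∈ Subgroup.zpowers g ∧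
        (Submodule.span L {v}).map (Matrix.toLin' (A : Matrix (Fin 2) (Fin 2) L))
          = Submodule.span L {v'} := by
    intro v v' hv hv'
    obtain ⟨i, hi⟩ := htrans v v' hv hv'
    obtain ⟨m, hm⟩ := hqeven
    refine ⟨g ^ (-(i * (m + 1) : ℤ)), ⟨_, rfl⟩, ?_⟩
    have hqz : (q : ℤ) = 2 * m := by exact_mod_cast (by omega : q = 2 * m)
    have hfactor : (M ^ (q + 1)) ^ (i * m) * g ^ (-(i * (m + 1) : ℤ)) = M ^ i := by
      rw [hg]
      have e1 : ((M ^ (q + 1)) ^ (i * m) : GL (Fin 2) L) = M ^ (((q + 1) * (i * m) : ℕ) : ℤ) := by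
        rw [← pow_mul, zpow_natCast]
      have e2 : ((M ^ (q - 1) : GL (Fin 2) L)) ^ (-(i * (m + 1) : ℤ))
          = M ^ ((((q : ℤ) - 1)) * (-(i * (m + 1) : ℤ))) := by
        rw [← zpow_natCast M (q - 1), ← zpow_mul]
        congr 1
        push_cast [Nat.cast_sub (by omega : 1 ≤ q)]
        ring
      rw [e1, e2, ← zpow_add, ← zpow_natCast M i]
      congr 1
      push_cast
      linear_combination (-(i : ℤ)) * hqz
    have hmap : (Submodule.span L {v}).map
        (Matrix.toLin' ((M ^ i : GL (Fin 2) L) : Matrix (Fin 2) (Fin 2) L))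
        = Submodule.span L {v'} := by
      rw [map_span_singleton, Units.val_pow_eq_pow_val, hi]
    rw [← hfactor, Units.val_mul, Matrix.toLin'_mul, Submodule.map_comp] at hmap
    rwa [Units.val_pow_eq_pow_val, Units.val_pow_eq_pow_val, hMqa, _root_.smul_pow, one_pow,
      map_scalar_smul (pow_ne_zero _ hd0)] at hmap
  -- from L-lines to spread members
  constructor
  · rintro U ⟨l, hl, rfl⟩ U' ⟨l', hl', rfl⟩
    obtain ⟨v, hv, rfl⟩ := finrank_one_span hl
    obtain ⟨v', hv', rfl⟩ := finrank_one_span hl'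
    obtain ⟨A, hA, hAmap⟩ := hexist v v' hv hv'
    refine ⟨A, ⟨hA, by rw [mapGLK_restrictScalars, hAmap]⟩, ?_⟩
    rintro B ⟨hB, hBmap⟩
    rw [mapGLK_restrictScalars] at hBmap
    have hBl : (Submodule.span L {v}).map
        (Matrix.toLin' ((B : Matrix (Fin 2) (Fin 2) L)))
        = Submodule.span L {v'} :=
      Submodule.restrictScalars_injective K _ _ hBmap
    -- A⁻¹ * B fixes the line spanned by v
    have hC : (Submodule.span L {v}).map
        (Matrix.toLin' ((A⁻¹ * B : GL (Fin 2) L) : Matrix (Fin 2) (Fin 2) L))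
        = Submodule.span L {v} := by
      rw [Units.val_mul, Matrix.toLin'_mul, Submodule.map_comp, hBl, ← hAmap,
        ← Submodule.map_comp, ← Matrix.toLin'_mul, ← Units.val_mul, inv_mul_cancel A,
        Units.val_one, Matrix.toLin'_one, Submodule.map_id]
    have h1 : A⁻¹ * B = 1 := hfixline _ (Subgroup.mul_mem _ (Subgroup.inv_mem _ hA) hB) v hv hC
    calc B = A * (A⁻¹ * B) := by group
    _ = A := by rw [h1, mul_one]
  · rintro U ⟨l, hl, rfl⟩
    ext U'
    constructor
    · rintro ⟨l', hl', rfl⟩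
      obtain ⟨v, hv, rfl⟩ := finrank_one_span hl
      obtain ⟨v', hv', rfl⟩ := finrank_one_span hl'
      obtain ⟨A, hA, hAmap⟩ := hexist v v' hv hv'
      exact ⟨A, hA, by rw [mapGLK_restrictScalars, hAmap]⟩
    · rintro ⟨A, hA, rfl⟩
      refine ⟨l.map (Matrix.toLin' ((A : Matrix (Fin 2) (Fin 2) L))), ?_, ?_⟩
      · rw [finrank_map_glEquiv A l, hl]
      · rw [mapGLK_restrictScalars]
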